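/- arXiv:1907.00905 — 2 statements merged into one kernel-verified Lean document; each statement's English description precedes it below -/
import Mathlib

section
/- For distinct natural numbers m ≠ k, the integral over ℝ of H_m(x) · H_k(x) · e^{-x²} dx equals 0. -/
open Polynomial MeasureTheory Real

/-- Physicists' Hermite polynomials: H₀=1, H₁=2x, H_{m+2} = 2x·H_{m+1} − 2(m+1)·H_m. -/
noncomputable def physHermite : ℕ → Polynomial ℝ
  | 0 => 1
  | 1 => Polynomial.C 2 * Polynomial.X
  | (m + 2) => Polynomial.C 2 * Polynomial.X * physHermite (m + 1)
      - Polynomial.C (2 * ((m : ℝ) + 1)) * physHermite m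

lemma physHermite_mul_X (n : ℕ) :
    C 2 * X * physHermite n = physHermite (n + 1) + C (2 * n : ℝ) * physHermite (n - 1) := by
  cases n with
  | zero => simp [physHermite]
  | succ n =>
    rw [show n + 1 + 1 = n + 2 from rfl, physHermite]
    push_cast
    ring

lemma physHermite_deriv (n : ℕ) :
    (physHermite n).derivative = C (2 * n : ℝ) * physHermite (n - 1) := by
  induction n using Nat.twoStepInduction with
  | zero => simp [physHermite]
  | one => simp [physHermite]
  | more n ih1 ih2 =>
    rw [show n + 2 = n + 2 from rfl, physHermite, derivative_sub, derivative_C_mul,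
      derivative_mul, derivative_mul, derivative_C, derivative_X, ih1, ih2]
    simp only [Nat.add_sub_cancel]
    push_cast
    rw [show C 2 * X * (C (2 * ((n : ℝ) + 1)) * physHermite n)
        = C (2 * ((n : ℝ) + 1)) * (C 2 * X * physHermite n) by ring,
      physHermite_mul_X n]
    simp only [C_mul, C_add, C_1, map_natCast C, map_ofNat]
    ring

lemma integrable_poly_gauss (P : Polynomial ℝ) :
    Integrable fun x : ℝ => P.eval x * Real.exp (-x ^ 2) := by
  induction P using Polynomial.induction_on' with
  | add p q hp hq => simpa [add_mul] using hp.fun_add hq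
  | monomial n a =>
    have h := integrable_rpow_mul_exp_neg_mul_sq (b := 1) one_pos
      (s := n) (lt_of_lt_of_le neg_one_lt_zero (Nat.cast_nonneg n))
    simp_rw [Real.rpow_natCast, neg_mul, one_mul] at h
    simpa [Polynomial.eval_monomial, mul_assoc] using h.const_mul a

lemma integral_deriv_poly (P : Polynomial ℝ) :
    ∫ x : ℝ, (P.derivative - C 2 * X * P).eval x * Real.exp (-x ^ 2) = 0 := by
  apply integral_eq_zero_of_hasDerivAt_of_integrable
    (f := fun x => P.eval x * Real.exp (-x ^ 2))
  · intro x
    have h2 : HasDerivAt (fun x : ℝ => -x ^ 2) (-(2 * x)) x := by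
      simpa using (hasDerivAt_pow 2 x).fun_neg
    have h1 : HasDerivAt (fun x : ℝ => Real.exp (-x ^ 2))
        (Real.exp (-x ^ 2) * -(2 * x)) x := h2.exp
    have := (P.hasDerivAt x).fun_mul h1
    convert this using 1
    · rfl
    simp only [eval_sub, eval_mul, eval_C, eval_X]
    ring
  · exact integrable_poly_gauss _
  · exact integrable_poly_gauss P

lemma key (m k : ℕ) :
    ∫ x : ℝ, (physHermite m).eval x * (physHermite (k + 1)).eval x * Real.exp (-x ^ 2)
      = (2 * m : ℝ) * ∫ x : ℝ,
          (physHermite (m - 1)).eval x * (physHermite k).eval x * Real.exp (-x ^ 2) := by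
  have hp : (physHermite m * physHermite k).derivative
        - C 2 * X * (physHermite m * physHermite k)
      = C (2 * m : ℝ) * (physHermite (m - 1) * physHermite k)
        - physHermite m * physHermite (k + 1) := by
    rw [derivative_mul, physHermite_deriv, physHermite_deriv]
    linear_combination (-(physHermite m)) * physHermite_mul_X k
  have h0 := integral_deriv_poly (physHermite m * physHermite k)
  rw [hp] at h0
  simp only [eval_sub, eval_mul, eval_C] at h0
  have hg1 : Integrable fun x : ℝ =>
      (physHermite (m - 1)).eval x * (physHermite k).eval x * Real.exp (-x ^ 2) := by
    simpa [eval_mul] using integrable_poly_gauss (physHermite (m - 1) * physHermite k)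
  have hg2 : Integrable fun x : ℝ =>
      (physHermite m).eval x * (physHermite (k + 1)).eval x * Real.exp (-x ^ 2) := by
    simpa [eval_mul] using integrable_poly_gauss (physHermite m * physHermite (k + 1))
  have e : (fun x : ℝ => (2 * (m : ℝ) * ((physHermite (m - 1)).eval x * (physHermite k).eval x)
        - (physHermite m).eval x * (physHermite (k + 1)).eval x) * Real.exp (-x ^ 2))
      = fun x : ℝ => (2 * (m : ℝ)) * ((physHermite (m - 1)).eval x * (physHermite k).eval x
          * Real.exp (-x ^ 2))
        - (physHermite m).eval x * (physHermite (k + 1)).eval x * Real.exp (-x ^ 2) := by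
    funext x; ring
  rw [e, integral_sub (hg1.const_mul _) hg2, MeasureTheory.integral_const_mul] at h0
  linarith

lemma aux : ∀ m k : ℕ, m < k →
    ∫ x : ℝ, (physHermite m).eval x * (physHermite k).eval x * Real.exp (-x ^ 2) = 0 := by
  intro m
  induction m with
  | zero =>
    intro k hk
    obtain ⟨k', rfl⟩ : ∃ k', k = k' + 1 := ⟨k - 1, by omega⟩
    rw [key]; simp
  | succ m ih =>
    intro k hk
    obtain ⟨k', rfl⟩ : ∃ k', k = k' + 1 := ⟨k - 1, by omega⟩
    rw [key, Nat.add_sub_cancel, ih k' (by omega), mul_zero]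

theorem stmt4 (m k : ℕ) (hmk : m ≠ k) :
    ∫ x : ℝ, (physHermite m).eval x * (physHermite k).eval x * Real.exp (-x ^ 2) = 0 := by
  rcases hmk.lt_or_gt with h | h
  · exact aux m k h
  · calc ∫ x : ℝ, (physHermite m).eval x * (physHermite k).eval x * Real.exp (-x ^ 2)
        = ∫ x : ℝ, (physHermite k).eval x * (physHermite m).eval x * Real.exp (-x ^ 2) := by
          congr 1; funext x; ring
      _ = 0 := aux k m h
end

section
/- Let Θ be a compact topological space and let γ̂ : Θ → ℝⁿ be a continuous map. If Θ is infinite, then for every δ > 0 there exists a continuous map γ : Θ → ℝⁿ with sup_{θ∈Θ} ‖γ(θ) − γ̂(θ)‖ < δ such that γ is constant on some nonempty open subset of Θ. -/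
theorem stmt18 (n : ℕ) (Θ : Type*) [TopologicalSpace Θ] [CompactSpace Θ] [T2Space Θ]
    [Infinite Θ] (γ₀ : Θ → EuclideanSpace ℝ (Fin n)) (hγ₀ : Continuous γ₀) :
    ∀ δ > (0:ℝ), ∃ γ : Θ → EuclideanSpace ℝ (Fin n), Continuous γ ∧
      (⨆ θ, ‖γ θ - γ₀ θ‖) < δ ∧
      ∃ U : Set Θ, IsOpen U ∧ U.Nonempty ∧ ∃ c, ∀ θ ∈ U, γ θ = c := by
  intro δ hδ
  obtain ⟨θ₀⟩ : Nonempty Θ := inferInstance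
  set c := γ₀ θ₀ with hc
  set V : Set Θ := γ₀ ⁻¹' Metric.ball c (δ/3) with hV
  have hVopen : IsOpen V := (Metric.isOpen_ball).preimage hγ₀
  have hθ₀V : θ₀ ∈ V := by
    have : (0:ℝ) < δ/3 := by linarith
    simp [hV, Metric.mem_ball, this, hc]
  obtain ⟨W, hWopen, hθ₀W, hWV⟩ :=
    normal_exists_closure_subset (isClosed_singleton (x := θ₀)) hVopen
      (Set.singleton_subset_iff.mpr hθ₀V)
  obtain ⟨f, hf0, hf1, hf01⟩ := exists_continuous_zero_one_of_isClosed
    (isClosed_compl_iff.mpr hVopen) isClosed_closure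
    (Set.disjoint_left.mpr fun x hx hx' => hx (hWV hx'))
  refine ⟨fun θ => γ₀ θ + f θ • (c - γ₀ θ), hγ₀.add (f.continuous.smul (continuous_const.sub hγ₀)), ?_, W, hWopen,
    ⟨θ₀, hθ₀W rfl⟩, c, fun θ hθ => ?_⟩
  · have hb : ∀ θ, ‖γ₀ θ + f θ • (c - γ₀ θ) - γ₀ θ‖ ≤ δ/3 := by
      intro θ
      have : γ₀ θ + f θ • (c - γ₀ θ) - γ₀ θ = f θ • (c - γ₀ θ) := by abel
      rw [this, norm_smul]
      by_cases hθ : θ ∈ V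
      · have h1 : ‖(f θ : ℝ)‖ ≤ 1 := by
          rw [Real.norm_eq_abs, abs_le]; exact ⟨by linarith [(hf01 θ).1], (hf01 θ).2⟩
        have h2 : ‖c - γ₀ θ‖ ≤ δ/3 := by
          have := hθ
          simp only [hV, Set.mem_preimage, Metric.mem_ball, dist_eq_norm] at this
          rw [norm_sub_rev] at this; linarith
        calc ‖(f θ : ℝ)‖ * ‖c - γ₀ θ‖ ≤ 1 * (δ/3) :=
              mul_le_mul h1 h2 (norm_nonneg _) zero_le_one
          _ = δ/3 := one_mul _
      · have : f θ = 0 := hf0 hθ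
        simp [this]; linarith
    have : (⨆ θ, ‖γ₀ θ + f θ • (c - γ₀ θ) - γ₀ θ‖) ≤ δ/3 := ciSup_le hb
    linarith
  · have : f θ = 1 := hf1 (subset_closure hθ)
    simp [this]
end
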